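/- Let C₁, C₃, M, D₀ ≥ 0 be real numbers. Let f : [-1, ∞) → ℝ be continuous, differentiable on [0, ∞), with |f'(t)| ≤ C₁·exp(-t) for all t ≥ 0. Let h : [-1, ∞) → ℝ be continuous with 0 ≤ h(s) for all s ≥ -1, h(s) ≤ M for all s ≥ 0, and ∫_{-1}^{0} h(s) ds ≤ D₀. Let E : [0, ∞) → ℝ satisfy 0 ≤ E(t) ≤ C₃·exp(-2t) for all t ≥ 0. Assume that for every t ≥ 0 one has f(-1) ≥ f(t) - (∫_{-1}^{t} h(s) ds)·√(E(t)). Then f(-1) ≥ f(0) - C₁. -/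

import Mathlib

/-- Full analytic skeleton of the proof of Theorem 0.1: the modified K-energy `f`,
the speed `h` of the path of potentials, and the modified Calabi energy `E`,
together with Chen's slope-type inequality, give the lower bound
`f(-1) ≥ f(0) - C₁`. -/
theorem stmt_4 (C₁ C₃ M D₀ : ℝ) (hC₁ : 0 ≤ C₁) (hC₃ : 0 ≤ C₃) (hM : 0 ≤ M)
    (hD₀ : 0 ≤ D₀) (f f' h E : ℝ → ℝ)
    (hfcont : ContinuousOn f (Set.Ici (-1 : ℝ)))
    (hfdiff : ∀ t ≥ (0 : ℝ), HasDerivAt f (f' t) t)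
    (hfbound : ∀ t ≥ (0 : ℝ), |f' t| ≤ C₁ * Real.exp (-t))
    (hhcont : ContinuousOn h (Set.Ici (-1 : ℝ)))
    (hhnonneg : ∀ s ≥ (-1 : ℝ), 0 ≤ h s)
    (hhbound : ∀ s ≥ (0 : ℝ), h s ≤ M)
    (hhint : (∫ s in (-1 : ℝ)..(0 : ℝ), h s) ≤ D₀)
    (hE₀ : ∀ t ≥ (0 : ℝ), 0 ≤ E t)
    (hE : ∀ t ≥ (0 : ℝ), E t ≤ C₃ * Real.exp (-2 * t))
    (hslope : ∀ t ≥ (0 : ℝ),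
      f (-1) ≥ f t - (∫ s in (-1 : ℝ)..t, h s) * Real.sqrt (E t)) :
    f (-1) ≥ f 0 - C₁ := by
  -- Step 1: f t ≥ f 0 - C₁ for all t ≥ 0, via monotonicity of v t = f t + C₁(1 - e^{-t}).
  set v : ℝ → ℝ := fun t => f t + C₁ * (1 - Real.exp (-t)) with hv_def
  have hvderiv : ∀ x ∈ Set.Ici (0:ℝ), HasDerivAt v (f' x + C₁ * Real.exp (-x)) x := by
    intro x hx
    have h1 : HasDerivAt (fun y : ℝ => Real.exp (-y)) (-Real.exp (-x)) x := by
      have := (Real.hasDerivAt_exp (-x)).comp x (hasDerivAt_neg x)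
      simpa [Function.comp_def] using this
    have h2 : HasDerivAt (fun y : ℝ => C₁ * (1 - Real.exp (-y))) (C₁ * Real.exp (-x)) x := by
      have := ((hasDerivAt_const x (1:ℝ)).sub h1).const_mul C₁
      simpa using this
    exact (hfdiff x hx).add h2
  have hvmono : MonotoneOn v (Set.Ici (0:ℝ)) := by
    apply monotoneOn_of_deriv_nonneg (convex_Ici 0)
    · exact fun x hx => ((hvderiv x hx).continuousAt).continuousWithinAt
    · intro x hx
      rw [interior_Ici] at hx
      exact (hvderiv x (Set.mem_Ici.mpr (le_of_lt hx))).differentiableAt.differentiableWithinAt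
    · intro x hx
      rw [interior_Ici] at hx
      rw [(hvderiv x (Set.mem_Ici.mpr (le_of_lt hx))).deriv]
      have := abs_le.mp (hfbound x (le_of_lt hx))
      linarith [this.1]
  have key : ∀ t ≥ (0:ℝ), f 0 - C₁ ≤ f t := by
    intro t ht
    have := hvmono (Set.self_mem_Ici) (Set.mem_Ici.mpr ht) ht
    have hexp : Real.exp (-t) ≤ 1 := Real.exp_le_one_iff.mpr (by linarith)
    have hexp0 : 0 < Real.exp (-t) := Real.exp_pos _
    simp only [hv_def, neg_zero, Real.exp_zero] at this
    nlinarith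
  -- Step 2: bound the integral of h.
  have hint : ∀ t ≥ (0:ℝ), (∫ s in (-1:ℝ)..t, h s) ≤ D₀ + M * t := by
    intro t ht
    have hii : ∀ a b : ℝ, a ∈ Set.Ici (-1:ℝ) → b ∈ Set.Ici (-1:ℝ) →
        IntervalIntegrable h MeasureTheory.volume a b := by
      intro a b ha hb
      apply ContinuousOn.intervalIntegrable
      apply hhcont.mono
      intro x hx
      exact le_trans (le_min ha hb) hx.1
    have hsplit : (∫ s in (-1:ℝ)..t, h s)
        = (∫ s in (-1:ℝ)..(0:ℝ), h s) + ∫ s in (0:ℝ)..t, h s := by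
      rw [intervalIntegral.integral_add_adjacent_intervals
        (hii _ _ (by norm_num) (by norm_num)) (hii _ _ (by norm_num) (by simpa using by linarith))]
    have h2 : (∫ s in (0:ℝ)..t, h s) ≤ M * t := by
      have := intervalIntegral.integral_mono_on ht
        (hii 0 t (by norm_num) (by simpa using by linarith))
        (intervalIntegrable_const (c := M)) (fun s hs => hhbound s hs.1)
      simp only [intervalIntegral.integral_const, smul_eq_mul, sub_zero] at this
      linarith [this]
    linarith [hsplit, h2]
  have hintnn : ∀ t ≥ (0:ℝ), (0:ℝ) ≤ ∫ s in (-1:ℝ)..t, h s := by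
    intro t ht
    apply intervalIntegral.integral_nonneg (by linarith)
    intro s hs; exact hhnonneg s hs.1
  -- Step 3: bound √(E t).
  have hsqrt : ∀ t ≥ (0:ℝ), Real.sqrt (E t) ≤ Real.sqrt C₃ * Real.exp (-t) := by
    intro t ht
    have : Real.sqrt (E t) ≤ Real.sqrt (C₃ * Real.exp (-2 * t)) :=
      Real.sqrt_le_sqrt (hE t ht)
    calc Real.sqrt (E t) ≤ Real.sqrt (C₃ * Real.exp (-2 * t)) := this
      _ = Real.sqrt C₃ * Real.exp (-t) := by
          rw [Real.sqrt_mul hC₃, show (-2:ℝ) * t = (-t) + (-t) by ring, Real.exp_add,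
            Real.sqrt_mul_self (Real.exp_nonneg _)]
  -- Step 4: combine, for every t ≥ 0:
  have hmain : ∀ t ≥ (0:ℝ),
      f 0 - C₁ - (D₀ + M * t) * (Real.sqrt C₃ * Real.exp (-t)) ≤ f (-1) := by
    intro t ht
    have hs := hslope t ht
    have hprod : (∫ s in (-1:ℝ)..t, h s) * Real.sqrt (E t)
        ≤ (D₀ + M * t) * (Real.sqrt C₃ * Real.exp (-t)) :=
      mul_le_mul (hint t ht) (hsqrt t ht) (Real.sqrt_nonneg _)
        (by nlinarith)
    have := key t ht
    linarith
  -- Step 5: take t → ∞.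
  have htend : Filter.Tendsto
      (fun t : ℝ => f 0 - C₁ - (D₀ + M * t) * (Real.sqrt C₃ * Real.exp (-t)))
      Filter.atTop (nhds (f 0 - C₁)) := by
    have h1 : Filter.Tendsto (fun t : ℝ => (D₀ + M * t) * (Real.sqrt C₃ * Real.exp (-t)))
        Filter.atTop (nhds 0) := by
      have ha : Filter.Tendsto (fun t : ℝ => Real.exp (-t)) Filter.atTop (nhds 0) := by
        simpa using Real.tendsto_exp_neg_atTop_nhds_zero
      have hb : Filter.Tendsto (fun t : ℝ => t * Real.exp (-t)) Filter.atTop (nhds 0) := by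
        have := Real.tendsto_pow_mul_exp_neg_atTop_nhds_zero 1
        simpa using this
      have : Filter.Tendsto
          (fun t : ℝ => D₀ * (Real.sqrt C₃ * Real.exp (-t))
            + M * Real.sqrt C₃ * (t * Real.exp (-t))) Filter.atTop (nhds 0) := by
        have h1' := ((ha.const_mul (Real.sqrt C₃)).const_mul D₀)
        have h2' := hb.const_mul (M * Real.sqrt C₃)
        simpa using h1'.add h2'
      refine this.congr (fun t => by ring)
    have := (tendsto_const_nhds (x := f 0 - C₁) (f := Filter.atTop (α := ℝ))).sub h1
    simpa using this
  exact le_of_tendsto htend (Filter.eventually_atTop.mpr ⟨0, hmain⟩)
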